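/- Let T = {x, y} be a two-element terminal set. A family F of subsets of T is the matching pattern on T of some finite simple graph containing x and y if and only if F is one of the seven families ∅, {∅}, {{x}}, {{y}}, {{x,y}}, {{x},{y}}, {∅,{x,y}}. -/

import Mathlib

/-- A finite simple graph: a finite vertex set together with a symmetric,
irreflexive adjacency relation whose endpoints lie in the vertex set. -/
structure FinGraph (V : Type) where
  verts : Set V
  finite : verts.Finite
  Adj : V → V → Prop
  symm : ∀ u v, Adj u v → Adj v u
  irrefl : ∀ v, ¬ Adj v v
  mem_of_adj : ∀ u v, Adj u v → u ∈ verts ∧ v ∈ verts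

/-- The set of vertices covered by a set of (unordered) edges. -/
def coversVerts {V : Type} (M : Set (Sym2 V)) : Set V := {v | ∃ e ∈ M, v ∈ e}

/-- `M` is a matching of `G`: a set of edges of `G`, no two of which share an endpoint. -/
def FinGraph.IsMatching {V : Type} (G : FinGraph V) (M : Set (Sym2 V)) : Prop :=
  (∀ e ∈ M, ∃ u v, G.Adj u v ∧ e = s(u, v)) ∧
  ∀ e ∈ M, ∀ f ∈ M, e ≠ f → ∀ v, v ∈ e → v ∉ f

/-- The matching pattern of `G` on a terminal set `T`: the family of subsets `X ⊆ T`
such that some matching of `G` covers exactly `(V(G) \ T) ∪ X`. -/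
def FinGraph.matchingPattern {V : Type} (G : FinGraph V) (T : Set V) : Set (Set V) :=
  {X | X ⊆ T ∧ ∃ M, G.IsMatching M ∧ coversVerts M = (G.verts \ T) ∪ X}

-- parity lemma: if M is a matching and coversVerts M is finite, then ncard is even
lemma covers_insert {V : Type} (e : Sym2 V) (M : Set (Sym2 V)) :
    coversVerts (insert e M) = {v | v ∈ e} ∪ coversVerts M := by
  ext v
  simp [coversVerts]

lemma even_ncard_covers {V : Type} (G : FinGraph V) (M : Set (Sym2 V))
    (hM : G.IsMatching M) (hfin : M.Finite) : Even (coversVerts M).ncard := by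
  revert hM
  refine Set.Finite.induction_on (motive := fun M _ => G.IsMatching M → Even (coversVerts M).ncard) M hfin ?_ ?_
  · intro _; simp [coversVerts]
  · rintro e M heM hMfin ih hM
    obtain ⟨h1, h2⟩ := hM
    obtain ⟨u, v, hadj, rfl⟩ := h1 _ (Set.mem_insert _ _)
    have huv : u ≠ v := fun h => G.irrefl v (h ▸ hadj)
    have heq : {w | w ∈ s(u,v)} = ({u, v} : Set V) := by
      ext w; simp [Sym2.mem_iff]
    rw [covers_insert, heq]
    have hdisj : Disjoint ({u, v} : Set V) (coversVerts M) := by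
      rw [Set.disjoint_left]
      rintro w hw ⟨f, hfM, hwf⟩
      have : s(u,v) ≠ f := fun h => heM (h ▸ hfM)
      exact h2 _ (Set.mem_insert _ _) _ (Set.mem_insert_of_mem _ hfM) this w
        (by rcases hw with rfl | rfl <;> simp) hwf
    have hfinM : (coversVerts M).Finite := by
      have : coversVerts M ⊆ ⋃ f ∈ M, {v | v ∈ f} := by
        rintro w ⟨f, hfM, hwf⟩
        exact Set.mem_biUnion hfM hwf
      refine Set.Finite.subset (Set.Finite.biUnion hMfin fun f _ => ?_) this
      obtain ⟨⟨a, b⟩, rfl⟩ := Quot.exists_rep f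
      have : {v | v ∈ s(a,b)} = ({a,b} : Set V) := by ext w; simp [Sym2.mem_iff]
      rw [this]; exact (Set.finite_singleton b).insert a
    rw [Set.ncard_union_eq hdisj ((Set.finite_singleton v).insert u) hfinM,
      Set.ncard_pair huv]
    have ih' : Even (coversVerts M).ncard := by
      refine ih ⟨fun f hf => h1 f (Set.mem_insert_of_mem _ hf), ?_⟩
      intro a ha b hb
      exact h2 a (Set.mem_insert_of_mem _ ha) b (Set.mem_insert_of_mem _ hb)
    obtain ⟨k, hk⟩ := ih'
    exact ⟨k + 1, by omega⟩

lemma matching_finite {V : Type} (G : FinGraph V) (M : Set (Sym2 V))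
    (hM : G.IsMatching M) (hfin : (coversVerts M).Finite) : M.Finite := by
  refine Set.Finite.of_finite_image (f := fun e => (Quot.out e).1) ?_ ?_
  · refine hfin.subset ?_
    rintro w ⟨e, heM, rfl⟩
    exact ⟨e, heM, Sym2.out_fst_mem e⟩
  · intro e he f hf hef
    by_contra hne
    have hef' : (Quot.out e).1 = (Quot.out f).1 := hef
    exact hM.2 e he f hf hne _ (Sym2.out_fst_mem e) (by rw [hef']; exact Sym2.out_fst_mem f)

lemma coversVerts_empty {V : Type} : coversVerts (∅ : Set (Sym2 V)) = ∅ := by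
  ext v; simp [coversVerts]

lemma coversVerts_single {V : Type} (u v : V) : coversVerts {s(u,v)} = ({u, v} : Set V) := by
  ext w; simp [coversVerts, Sym2.mem_iff]

lemma coversVerts_pair {V : Type} (u v a b : V) :
    coversVerts {s(u,v), s(a,b)} = ({u, v, a, b} : Set V) := by
  ext w; simp [coversVerts, Sym2.mem_iff]; tauto

def oneEdgeGraph {V : Type} (S : Set V) (hS : S.Finite) (u v : V) (huv : u ≠ v)
    (hu : u ∈ S) (hv : v ∈ S) : FinGraph V where
  verts := S
  finite := hS
  Adj a b := s(a,b) = s(u,v)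
  symm a b h := by show s(b,a) = s(u,v); rw [Sym2.eq_swap]; exact h
  irrefl w h := by
    have h' : s(w,w) = s(u,v) := h
    rw [Sym2.eq_iff] at h'; rcases h' with ⟨rfl, rfl⟩ | ⟨rfl, rfl⟩ <;> exact huv rfl
  mem_of_adj a b h := by
    have h' : s(a,b) = s(u,v) := h
    clear h; rename' h' => h
    rw [Sym2.eq_iff] at h
    rcases h with ⟨rfl, rfl⟩ | ⟨rfl, rfl⟩ <;> exact ⟨by assumption, by assumption⟩

lemma oneEdge_pattern {V : Type} (S : Set V) (hS : S.Finite) (u v : V) (huv : u ≠ v)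
    (hu : u ∈ S) (hv : v ∈ S) (T : Set V) :
    (oneEdgeGraph S hS u v huv hu hv).matchingPattern T =
      {X | X ⊆ T ∧ ((S \ T) ∪ X = ∅ ∨ (S \ T) ∪ X = {u, v})} := by
  ext X
  simp only [FinGraph.matchingPattern, Set.mem_setOf_eq, oneEdgeGraph]
  constructor
  · rintro ⟨hXT, M, ⟨hM1, hM2⟩, hcov⟩
    refine ⟨hXT, ?_⟩
    have hsub : M ⊆ {s(u,v)} := by
      intro e he
      obtain ⟨a, b, hab, rfl⟩ := hM1 e he
      exact hab
    rcases Set.subset_singleton_iff_eq.mp hsub with rfl | rfl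
    · left; rw [← hcov, coversVerts_empty]
    · right; rw [← hcov, coversVerts_single]
  · rintro ⟨hXT, h | h⟩
    · refine ⟨hXT, ∅, ⟨fun e he => absurd he (Set.notMem_empty e),
        fun e he => absurd he (Set.notMem_empty e)⟩, by rw [coversVerts_empty, h]⟩
    · refine ⟨hXT, {s(u,v)}, ⟨fun e he => ⟨u, v, rfl, he⟩, ?_⟩,
        by rw [coversVerts_single, h]⟩
      rintro e rfl f rfl hne
      exact absurd rfl hne

def noEdgeGraph {V : Type} (S : Set V) (hS : S.Finite) : FinGraph V where
  verts := S
  finite := hS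
  Adj _ _ := False
  symm _ _ h := h
  irrefl _ h := h
  mem_of_adj _ _ h := h.elim

lemma noEdge_pattern {V : Type} (S : Set V) (hS : S.Finite) (T : Set V) :
    (noEdgeGraph S hS).matchingPattern T = {X | X ⊆ T ∧ (S \ T) ∪ X = ∅} := by
  ext X
  simp only [FinGraph.matchingPattern, Set.mem_setOf_eq, noEdgeGraph]
  constructor
  · rintro ⟨hXT, M, ⟨hM1, _⟩, hcov⟩
    have hM0 : M = ∅ := by
      ext e; simp only [Set.mem_empty_iff_false, iff_false]
      intro he; obtain ⟨_, _, h, _⟩ := hM1 e he; exact h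
    subst hM0
    rw [coversVerts_empty] at hcov
    exact ⟨hXT, hcov.symm⟩
  · rintro ⟨hXT, h⟩
    exact ⟨hXT, ∅, ⟨fun e he => absurd he (Set.notMem_empty e),
      fun e he => absurd he (Set.notMem_empty e)⟩, by rw [coversVerts_empty, h]⟩

def twoEdgeGraph {V : Type} (S : Set V) (hS : S.Finite) (u v p q : V)
    (huv : u ≠ v) (hpq : p ≠ q) (hu : u ∈ S) (hv : v ∈ S) (hp : p ∈ S) (hq : q ∈ S) :
    FinGraph V where
  verts := S
  finite := hS
  Adj a b := s(a,b) = s(u,v) ∨ s(a,b) = s(p,q)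
  symm a b h := by
    show s(b,a) = s(u,v) ∨ s(b,a) = s(p,q); rw [Sym2.eq_swap]; exact h
  irrefl w h := by
    have h' : s(w,w) = s(u,v) ∨ s(w,w) = s(p,q) := h
    rcases h' with h' | h' <;> rw [Sym2.eq_iff] at h' <;>
      rcases h' with ⟨rfl, rfl⟩ | ⟨rfl, rfl⟩ <;> [exact huv rfl; exact huv rfl;
        exact hpq rfl; exact hpq rfl]
  mem_of_adj a b h := by
    have h' : s(a,b) = s(u,v) ∨ s(a,b) = s(p,q) := h
    rcases h' with h' | h' <;> rw [Sym2.eq_iff] at h' <;>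
      rcases h' with ⟨rfl, rfl⟩ | ⟨rfl, rfl⟩ <;> exact ⟨by assumption, by assumption⟩

lemma twoEdge_matchings {V : Type} (S : Set V) (hS : S.Finite) (u v p q : V)
    (huv : u ≠ v) (hpq : p ≠ q) (hu : u ∈ S) (hv : v ∈ S) (hp : p ∈ S) (hq : q ∈ S)
    (M : Set (Sym2 V))
    (hM : (twoEdgeGraph S hS u v p q huv hpq hu hv hp hq).IsMatching M) :
    M = ∅ ∨ M = {s(u,v)} ∨ M = {s(p,q)} ∨ M = {s(u,v), s(p,q)} := by
  have hsub : M ⊆ {s(u,v), s(p,q)} := by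
    intro e he
    obtain ⟨a, b, hab, rfl⟩ := hM.1 e he
    exact hab
  by_cases h1 : s(u,v) ∈ M <;> by_cases h2 : s(p,q) ∈ M
  · right; right; right
    apply Set.Subset.antisymm hsub
    rintro e (rfl | rfl) <;> assumption
  · right; left
    apply Set.Subset.antisymm
    · intro e he; rcases hsub he with rfl | rfl
      · rfl
      · exact absurd he h2
    · rintro e rfl; exact h1
  · right; right; left
    apply Set.Subset.antisymm
    · intro e he; rcases hsub he with rfl | rfl
      · exact absurd he h1
      · rfl
    · rintro e rfl; exact h2
  · left
    ext e; simp only [Set.mem_empty_iff_false, iff_false]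
    intro he; rcases hsub he with rfl | rfl
    · exact h1 he
    · exact h2 he

lemma singleEdge_isMatching {V : Type} (G : FinGraph V) (u v : V) (h : G.Adj u v) :
    G.IsMatching {s(u,v)} := by
  refine ⟨fun e he => ⟨u, v, h, he⟩, ?_⟩
  rintro e rfl f rfl hne
  exact absurd rfl hne

lemma empty_isMatching {V : Type} (G : FinGraph V) : G.IsMatching (∅ : Set (Sym2 V)) :=
  ⟨fun e he => absurd he (Set.notMem_empty e), fun e he => absurd he (Set.notMem_empty e)⟩

lemma twoEdgeDisjoint_pattern {V : Type} (S : Set V) (hS : S.Finite) (u v p q : V)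
    (huv : u ≠ v) (hpq : p ≠ q) (hup : u ≠ p) (huq : u ≠ q) (hvp : v ≠ p) (hvq : v ≠ q)
    (hu : u ∈ S) (hv : v ∈ S) (hp : p ∈ S) (hq : q ∈ S) (T : Set V) :
    (twoEdgeGraph S hS u v p q huv hpq hu hv hp hq).matchingPattern T =
      {X | X ⊆ T ∧ ((S \ T) ∪ X = ∅ ∨ (S \ T) ∪ X = {u, v} ∨
        (S \ T) ∪ X = {p, q} ∨ (S \ T) ∪ X = {u, v, p, q})} := by
  ext X
  simp only [FinGraph.matchingPattern, Set.mem_setOf_eq, twoEdgeGraph]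
  constructor
  · rintro ⟨hXT, M, hM, hcov⟩
    refine ⟨hXT, ?_⟩
    rcases twoEdge_matchings S hS u v p q huv hpq hu hv hp hq M hM with rfl | rfl | rfl | rfl
    · left; rw [← hcov, coversVerts_empty]
    · right; left; rw [← hcov, coversVerts_single]
    · right; right; left; rw [← hcov, coversVerts_single]
    · right; right; right; rw [← hcov, coversVerts_pair]
  · rintro ⟨hXT, h | h | h | h⟩
    · exact ⟨hXT, ∅, empty_isMatching _, by rw [coversVerts_empty, h]⟩
    · exact ⟨hXT, {s(u,v)}, singleEdge_isMatching _ u v (Or.inl rfl),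
        by rw [coversVerts_single, h]⟩
    · exact ⟨hXT, {s(p,q)}, singleEdge_isMatching _ p q (Or.inr rfl),
        by rw [coversVerts_single, h]⟩
    · refine ⟨hXT, {s(u,v), s(p,q)}, ⟨?_, ?_⟩, by rw [coversVerts_pair, h]⟩
      · rintro e (rfl | rfl)
        · exact ⟨u, v, Or.inl rfl, rfl⟩
        · exact ⟨p, q, Or.inr rfl, rfl⟩
      · rintro e (rfl | rfl) f (rfl | rfl) hne w hwe hwf
        · exact hne rfl
        · rw [Sym2.mem_iff] at hwe hwf
          rcases hwe with rfl | rfl <;> rcases hwf with h' | h' <;>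
            [exact hup h'; exact huq h'; exact hvp h'; exact hvq h']
        · rw [Sym2.mem_iff] at hwe hwf
          rcases hwe with rfl | rfl <;> rcases hwf with h' | h' <;>
            [exact hup h'.symm; exact hvp h'.symm; exact huq h'.symm; exact hvq h'.symm]
        · exact hne rfl

lemma twoEdgePath_pattern {V : Type} (S : Set V) (hS : S.Finite) (u v z : V)
    (huz : u ≠ z) (hvz : v ≠ z) (huv : u ≠ v)
    (hu : u ∈ S) (hv : v ∈ S) (hz : z ∈ S) (T : Set V) :
    (twoEdgeGraph S hS u z v z huz hvz hu hz hv hz).matchingPattern T =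
      {X | X ⊆ T ∧ ((S \ T) ∪ X = ∅ ∨ (S \ T) ∪ X = {u, z} ∨ (S \ T) ∪ X = {v, z})} := by
  ext X
  simp only [FinGraph.matchingPattern, Set.mem_setOf_eq, twoEdgeGraph]
  constructor
  · rintro ⟨hXT, M, hM, hcov⟩
    refine ⟨hXT, ?_⟩
    rcases twoEdge_matchings S hS u z v z huz hvz hu hz hv hz M hM with rfl | rfl | rfl | rfl
    · left; rw [← hcov, coversVerts_empty]
    · right; left; rw [← hcov, coversVerts_single]
    · right; right; rw [← hcov, coversVerts_single]
    · exfalso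
      have hne : s(u,z) ≠ s(v,z) := by
        rw [Ne, Sym2.eq_iff]
        rintro (⟨rfl, -⟩ | ⟨rfl, h⟩)
        · exact huv rfl
        · exact huv (h ▸ rfl)
      exact hM.2 s(u,z) (Or.inl rfl) s(v,z) (Or.inr rfl) hne z
        (Sym2.mem_iff.mpr (Or.inr rfl)) (Sym2.mem_iff.mpr (Or.inr rfl))
  · rintro ⟨hXT, h | h | h⟩
    · exact ⟨hXT, ∅, empty_isMatching _, by rw [coversVerts_empty, h]⟩
    · exact ⟨hXT, {s(u,z)}, singleEdge_isMatching _ u z (Or.inl rfl),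
        by rw [coversVerts_single, h]⟩
    · exact ⟨hXT, {s(v,z)}, singleEdge_isMatching _ v z (Or.inr rfl),
        by rw [coversVerts_single, h]⟩

lemma subset_pair_cases {V : Type} (x y : V) (X : Set V) (h : X ⊆ ({x, y} : Set V)) :
    X = ∅ ∨ X = {x} ∨ X = {y} ∨ X = ({x, y} : Set V) := by
  by_cases hx : x ∈ X <;> by_cases hy : y ∈ X
  · right; right; right
    refine Set.Subset.antisymm h ?_
    rintro w (rfl | rfl) <;> assumption
  · right; left
    ext w
    constructor
    · intro hw
      rcases h hw with rfl | rfl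
      · rfl
      · exact absurd hw hy
    · rintro rfl; exact hx
  · right; right; left
    ext w
    constructor
    · intro hw
      rcases h hw with rfl | rfl
      · exact absurd hw hx
      · rfl
    · rintro rfl; exact hy
  · left
    ext w
    simp only [Set.mem_empty_iff_false, iff_false]
    intro hw
    rcases h hw with rfl | rfl
    · exact hx hw
    · exact hy hw

lemma union_cancel_iff {V : Type} {A T X Y : Set V} (hA : Disjoint A T)
    (hX : X ⊆ T) (hY : Y ⊆ T) : A ∪ X = A ∪ Y ↔ X = Y := by
  constructor
  · intro h
    ext w
    constructor
    · intro hw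
      rcases (h ▸ Set.mem_union_right A hw : w ∈ A ∪ Y) with hw' | hw'
      · exact absurd hw' (Set.disjoint_right.mp hA (hX hw))
      · exact hw'
    · intro hw
      rcases (h ▸ Set.mem_union_right A hw : w ∈ A ∪ X) with hw' | hw'
      · exact absurd hw' (Set.disjoint_right.mp hA (hY hw))
      · exact hw'
  · intro h; rw [h]

/-- Characterization of the matching patterns on a two-element terminal set `T = {x, y}`:
a family `F` of subsets of `T` is the matching pattern on `T` of some finite simple graph
containing `x` and `y` if and only if `F` is one of the seven families
`∅`, `{∅}`, `{{x}}`, `{{y}}`, `{{x,y}}`, `{{x},{y}}`, `{∅,{x,y}}`. -/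
theorem matchingPattern_two_terminals {V : Type} [Infinite V] (x y : V) (hxy : x ≠ y)
    (F : Set (Set V)) (hF : ∀ X ∈ F, X ⊆ ({x, y} : Set V)) :
    (∃ G : FinGraph V, x ∈ G.verts ∧ y ∈ G.verts ∧ G.matchingPattern {x, y} = F) ↔
      (F = ∅ ∨ F = {∅} ∨ F = {{x}} ∨ F = {{y}} ∨ F = {{x, y}} ∨
       F = {{x}, {y}} ∨ F = {∅, {x, y}}) := by
  have hTfin : ({x, y} : Set V).Finite := (Set.finite_singleton y).insert x
  obtain ⟨z, hz⟩ := hTfin.infinite_compl.nonempty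
  have hz' : z ∉ ({x, y} : Set V) := hz
  have hzx : z ≠ x := fun h => hz' (Or.inl h)
  have hzy : z ≠ y := fun h => hz' (Or.inr h)
  obtain ⟨w, hw⟩ := (hTfin.insert z).infinite_compl.nonempty
  have hw' : w ∉ ({z, x, y} : Set V) := hw
  have hwz : w ≠ z := fun h => hw' (Or.inl h)
  have hwx : w ≠ x := fun h => hw' (Or.inr (Or.inl h))
  have hwy : w ≠ y := fun h => hw' (Or.inr (Or.inr h))
  constructor
  · rintro ⟨G, hxG, hyG, hpat⟩
    have hkey : ∀ X ∈ F, Even ((G.verts \ {x, y}).ncard + X.ncard) := by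
      intro X hXF
      rw [← hpat] at hXF
      obtain ⟨hXT, M, hM, hcov⟩ := hXF
      have hXfin : X.Finite := hTfin.subset hXT
      have hAfin : (G.verts \ {x, y}).Finite := G.finite.diff
      have hcfin : (coversVerts M).Finite := by rw [hcov]; exact hAfin.union hXfin
      have hMfin := matching_finite G M hM hcfin
      have heven := even_ncard_covers G M hM hMfin
      have hdisj : Disjoint (G.verts \ {x, y}) X :=
        Set.disjoint_left.mpr fun a ha haX => ha.2 (hXT haX)
      rwa [hcov, Set.ncard_union_eq hdisj hAfin hXfin] at heven
    have hparity : ∀ X ∈ F, ∀ Y ∈ F, Even (X.ncard + Y.ncard) := by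
      intro X hX Y hY
      obtain ⟨p, hp⟩ := hkey X hX
      obtain ⟨q, hq⟩ := hkey Y hY
      exact ⟨p + q - (G.verts \ {x, y}).ncard, by omega⟩
    have e12 : ¬((∅ : Set V) ∈ F ∧ ({x} : Set V) ∈ F) := by
      rintro ⟨hA, hB⟩
      obtain ⟨r, hr⟩ := hparity _ hA _ hB
      rw [Set.ncard_empty, Set.ncard_singleton] at hr; omega
    have e13 : ¬((∅ : Set V) ∈ F ∧ ({y} : Set V) ∈ F) := by
      rintro ⟨hA, hB⟩
      obtain ⟨r, hr⟩ := hparity _ hA _ hB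
      rw [Set.ncard_empty, Set.ncard_singleton] at hr; omega
    have e24 : ¬(({x} : Set V) ∈ F ∧ ({x, y} : Set V) ∈ F) := by
      rintro ⟨hA, hB⟩
      obtain ⟨r, hr⟩ := hparity _ hA _ hB
      rw [Set.ncard_singleton, Set.ncard_pair hxy] at hr; omega
    have e34 : ¬(({y} : Set V) ∈ F ∧ ({x, y} : Set V) ∈ F) := by
      rintro ⟨hA, hB⟩
      obtain ⟨r, hr⟩ := hparity _ hA _ hB
      rw [Set.ncard_singleton, Set.ncard_pair hxy] at hr; omega
    by_cases h1 : (∅ : Set V) ∈ F <;> by_cases h2 : ({x} : Set V) ∈ F <;>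
      by_cases h3 : ({y} : Set V) ∈ F <;> by_cases h4 : ({x, y} : Set V) ∈ F
    all_goals try exact absurd (And.intro h1 h2) e12
    all_goals try exact absurd (And.intro h1 h3) e13
    all_goals try exact absurd (And.intro h2 h4) e24
    all_goals try exact absurd (And.intro h3 h4) e34
    -- survivors: TFFT, TFFF, FTTF, FTFF, FFTF, FFFT, FFFF
    · -- F = {∅, {x,y}}
      refine Or.inr (Or.inr (Or.inr (Or.inr (Or.inr (Or.inr ?_)))))
      ext Z
      constructor
      · intro hZ
        rcases subset_pair_cases x y Z (hF Z hZ) with rfl | rfl | rfl | rfl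
        · exact Or.inl rfl
        · exact absurd hZ h2
        · exact absurd hZ h3
        · exact Or.inr rfl
      · rintro (rfl | rfl)
        · exact h1
        · exact h4
    · -- F = {∅}
      refine Or.inr (Or.inl ?_)
      ext Z
      constructor
      · intro hZ
        rcases subset_pair_cases x y Z (hF Z hZ) with rfl | rfl | rfl | rfl
        · rfl
        · exact absurd hZ h2
        · exact absurd hZ h3
        · exact absurd hZ h4
      · rintro rfl; exact h1
    · -- F = {{x}, {y}}
      refine Or.inr (Or.inr (Or.inr (Or.inr (Or.inr (Or.inl ?_)))))
      ext Z
      constructor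
      · intro hZ
        rcases subset_pair_cases x y Z (hF Z hZ) with rfl | rfl | rfl | rfl
        · exact absurd hZ h1
        · exact Or.inl rfl
        · exact Or.inr rfl
        · exact absurd hZ h4
      · rintro (rfl | rfl)
        · exact h2
        · exact h3
    · -- F = {{x}}
      refine Or.inr (Or.inr (Or.inl ?_))
      ext Z
      constructor
      · intro hZ
        rcases subset_pair_cases x y Z (hF Z hZ) with rfl | rfl | rfl | rfl
        · exact absurd hZ h1
        · rfl
        · exact absurd hZ h3
        · exact absurd hZ h4
      · rintro rfl; exact h2
    · -- F = {{y}}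
      refine Or.inr (Or.inr (Or.inr (Or.inl ?_)))
      ext Z
      constructor
      · intro hZ
        rcases subset_pair_cases x y Z (hF Z hZ) with rfl | rfl | rfl | rfl
        · exact absurd hZ h1
        · exact absurd hZ h2
        · rfl
        · exact absurd hZ h4
      · rintro rfl; exact h3
    · -- F = {{x, y}}
      refine Or.inr (Or.inr (Or.inr (Or.inr (Or.inl ?_))))
      ext Z
      constructor
      · intro hZ
        rcases subset_pair_cases x y Z (hF Z hZ) with rfl | rfl | rfl | rfl
        · exact absurd hZ h1
        · exact absurd hZ h2
        · exact absurd hZ h3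
        · rfl
      · rintro rfl; exact h4
    · -- F = ∅
      refine Or.inl ?_
      ext Z
      simp only [Set.mem_empty_iff_false, iff_false]
      intro hZ
      rcases subset_pair_cases x y Z (hF Z hZ) with rfl | rfl | rfl | rfl
      · exact h1 hZ
      · exact h2 hZ
      · exact h3 hZ
      · exact h4 hZ
  · have hS3fin : ({x, y, z} : Set V).Finite := ((Set.finite_singleton z).insert y).insert x
    have hS4fin : ({x, y, z, w} : Set V).Finite :=
      (((Set.finite_singleton w).insert z).insert y).insert x
    have hdiff3 : ({x, y, z} : Set V) \ {x, y} = {z} := by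
      ext v
      constructor
      · rintro ⟨hv1, hv2⟩
        rcases hv1 with rfl | rfl | rfl
        · exact absurd (Or.inl rfl) hv2
        · exact absurd (Or.inr rfl) hv2
        · rfl
      · rintro rfl
        exact ⟨Or.inr (Or.inr rfl), hz'⟩
    have hdiff4 : ({x, y, z, w} : Set V) \ {x, y} = {z, w} := by
      ext v
      constructor
      · rintro ⟨hv1, hv2⟩
        rcases hv1 with rfl | rfl | rfl | rfl
        · exact absurd (Or.inl rfl) hv2
        · exact absurd (Or.inr rfl) hv2
        · exact Or.inl rfl
        · exact Or.inr rfl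
      · rintro (rfl | rfl)
        · exact ⟨Or.inr (Or.inr (Or.inl rfl)), hz'⟩
        · refine ⟨Or.inr (Or.inr (Or.inr rfl)), ?_⟩
          rintro (rfl | rfl)
          · exact hwx rfl
          · exact hwy rfl
    have hdisjzT : Disjoint ({z} : Set V) ({x, y} : Set V) :=
      Set.disjoint_singleton_left.mpr hz'
    have hdisjzwT : Disjoint ({z, w} : Set V) ({x, y} : Set V) := by
      rw [Set.disjoint_left]
      rintro a (rfl | rfl)
      · exact hz'
      · rintro (rfl | rfl)
        · exact hwx rfl
        · exact hwy rfl
    rintro (rfl | rfl | rfl | rfl | rfl | rfl | rfl)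
    · -- F = ∅
      refine ⟨noEdgeGraph {x, y, z} hS3fin, Or.inl rfl, Or.inr (Or.inl rfl), ?_⟩
      rw [noEdge_pattern, hdiff3]
      ext X
      simp only [Set.mem_setOf_eq, Set.mem_empty_iff_false, iff_false]
      rintro ⟨-, h⟩
      have hzz : z ∈ ({z} : Set V) ∪ X := Or.inl rfl
      rw [h] at hzz
      exact hzz
    · -- F = {∅}
      refine ⟨noEdgeGraph {x, y} hTfin, Or.inl rfl, Or.inr rfl, ?_⟩
      rw [noEdge_pattern, Set.diff_self]
      ext X
      simp only [Set.mem_setOf_eq, Set.empty_union, Set.mem_singleton_iff]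
      constructor
      · rintro ⟨-, h⟩; exact h
      · rintro rfl; exact ⟨Set.empty_subset _, rfl⟩
    · -- F = {{x}}
      refine ⟨oneEdgeGraph {x, y, z} hS3fin x z hzx.symm (Or.inl rfl) (Or.inr (Or.inr rfl)),
        Or.inl rfl, Or.inr (Or.inl rfl), ?_⟩
      rw [oneEdge_pattern {x, y, z} hS3fin x z hzx.symm (Or.inl rfl) (Or.inr (Or.inr rfl)), hdiff3]
      have h2 : ({x, z} : Set V) = {z} ∪ {x} := by
        ext v
        simp only [Set.mem_union, Set.mem_insert_iff, Set.mem_singleton_iff]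
        tauto
      ext X
      simp only [Set.mem_setOf_eq, Set.mem_singleton_iff]
      constructor
      · rintro ⟨hXT, h | h⟩
        · exfalso
          have hzz : z ∈ ({z} : Set V) ∪ X := Or.inl rfl
          rw [h] at hzz
          exact hzz
        · rw [h2] at h
          exact (union_cancel_iff hdisjzT hXT (by simp)).mp h
      · rintro rfl
        refine ⟨by simp, Or.inr ?_⟩
        rw [h2]
    · -- F = {{y}}
      refine ⟨oneEdgeGraph {x, y, z} hS3fin y z hzy.symm (Or.inr (Or.inl rfl))
        (Or.inr (Or.inr rfl)), Or.inl rfl, Or.inr (Or.inl rfl), ?_⟩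
      rw [oneEdge_pattern {x, y, z} hS3fin y z hzy.symm (Or.inr (Or.inl rfl))
        (Or.inr (Or.inr rfl)), hdiff3]
      have h2 : ({y, z} : Set V) = {z} ∪ {y} := by
        ext v
        simp only [Set.mem_union, Set.mem_insert_iff, Set.mem_singleton_iff]
        tauto
      ext X
      simp only [Set.mem_setOf_eq, Set.mem_singleton_iff]
      constructor
      · rintro ⟨hXT, h | h⟩
        · exfalso
          have hzz : z ∈ ({z} : Set V) ∪ X := Or.inl rfl
          rw [h] at hzz
          exact hzz
        · rw [h2] at h
          exact (union_cancel_iff hdisjzT hXT (by simp)).mp h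
      · rintro rfl
        refine ⟨by simp, Or.inr ?_⟩
        rw [h2]
    · -- F = {{x, y}}
      refine ⟨twoEdgeGraph {x, y, z, w} hS4fin x z y w hzx.symm hwy.symm (Or.inl rfl)
        (Or.inr (Or.inr (Or.inl rfl))) (Or.inr (Or.inl rfl)) (Or.inr (Or.inr (Or.inr rfl))),
        Or.inl rfl, Or.inr (Or.inl rfl), ?_⟩
      rw [twoEdgeDisjoint_pattern {x, y, z, w} hS4fin x z y w hzx.symm hwy.symm hxy hwx.symm
        hzy hwz.symm (Or.inl rfl) (Or.inr (Or.inr (Or.inl rfl))) (Or.inr (Or.inl rfl))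
        (Or.inr (Or.inr (Or.inr rfl))), hdiff4]
      have h2 : ({x, z, y, w} : Set V) = {z, w} ∪ {x, y} := by
        ext v
        simp only [Set.mem_union, Set.mem_insert_iff, Set.mem_singleton_iff]
        tauto
      ext X
      simp only [Set.mem_setOf_eq, Set.mem_singleton_iff]
      constructor
      · rintro ⟨hXT, h | h | h | h⟩
        · exfalso
          have hzz : z ∈ ({z, w} : Set V) ∪ X := Or.inl (Or.inl rfl)
          rw [h] at hzz
          exact hzz
        · exfalso
          have hww : w ∈ ({z, w} : Set V) ∪ X := Or.inl (Or.inr rfl)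
          rw [h] at hww
          rcases hww with h' | h'
          · exact hwx h'
          · exact hwz h'
        · exfalso
          have hzz : z ∈ ({z, w} : Set V) ∪ X := Or.inl (Or.inl rfl)
          rw [h] at hzz
          rcases hzz with h' | h'
          · exact hzy h'
          · exact hwz h'.symm
        · rw [h2] at h
          exact (union_cancel_iff hdisjzwT hXT Set.Subset.rfl).mp h
      · rintro rfl
        refine ⟨Set.Subset.rfl, Or.inr (Or.inr (Or.inr ?_))⟩
        rw [h2]
    · -- F = {{x}, {y}}
      refine ⟨twoEdgeGraph {x, y, z} hS3fin x z y z hzx.symm hzy.symm (Or.inl rfl)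
        (Or.inr (Or.inr rfl)) (Or.inr (Or.inl rfl)) (Or.inr (Or.inr rfl)),
        Or.inl rfl, Or.inr (Or.inl rfl), ?_⟩
      rw [twoEdgePath_pattern {x, y, z} hS3fin x y z hzx.symm hzy.symm hxy (Or.inl rfl)
        (Or.inr (Or.inl rfl)) (Or.inr (Or.inr rfl)), hdiff3]
      have h2 : ({x, z} : Set V) = {z} ∪ {x} := by
        ext v
        simp only [Set.mem_union, Set.mem_insert_iff, Set.mem_singleton_iff]
        tauto
      have h3 : ({y, z} : Set V) = {z} ∪ {y} := by
        ext v
        simp only [Set.mem_union, Set.mem_insert_iff, Set.mem_singleton_iff]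
        tauto
      ext X
      simp only [Set.mem_setOf_eq, Set.mem_insert_iff, Set.mem_singleton_iff]
      constructor
      · rintro ⟨hXT, h | h | h⟩
        · exfalso
          have hzz : z ∈ ({z} : Set V) ∪ X := Or.inl rfl
          rw [h] at hzz
          exact hzz
        · left
          rw [h2] at h
          exact (union_cancel_iff hdisjzT hXT (by simp)).mp h
        · right
          rw [h3] at h
          exact (union_cancel_iff hdisjzT hXT (by simp)).mp h
      · rintro (rfl | rfl)
        · refine ⟨by simp, Or.inr (Or.inl ?_)⟩
          rw [h2]
        · refine ⟨by simp, Or.inr (Or.inr ?_)⟩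
          rw [h3]
    · -- F = {∅, {x, y}}
      refine ⟨oneEdgeGraph {x, y} hTfin x y hxy (Or.inl rfl) (Or.inr rfl),
        Or.inl rfl, Or.inr rfl, ?_⟩
      rw [oneEdge_pattern {x, y} hTfin x y hxy (Or.inl rfl) (Or.inr rfl), Set.diff_self]
      ext X
      simp only [Set.mem_setOf_eq, Set.empty_union, Set.mem_insert_iff, Set.mem_singleton_iff]
      constructor
      · rintro ⟨-, h⟩; exact h
      · rintro (rfl | rfl)
        · exact ⟨Set.empty_subset _, Or.inl rfl⟩
        · exact ⟨Set.Subset.rfl, Or.inr rfl⟩
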